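/- arXiv:1503.02778 — 3 statements merged into one kernel-verified Lean document; each statement's English description precedes it below -/
import Mathlib

section
/- Let $\Phi$ denote the standard normal CDF. For any $c \in \mathbb{R}$, $\varepsilon > 0$, $t > 0$, one has $\Phi(c\sqrt{t} + \varepsilon/\sqrt{t}) - e^{-2c\varepsilon}\Phi(c\sqrt{t} - \varepsilon/\sqrt{t}) \le \varepsilon(\sqrt{2/(\pi t)} + 2\max\{c,0\})$. -/
open Real

/-- The standard normal cumulative distribution function. -/
noncomputable def stdNormalCDF (x : ℝ) : ℝ :=
  ∫ u in Set.Iic x, Real.exp (-u ^ 2 / 2) / Real.sqrt (2 * Real.pi)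

open MeasureTheory in
lemma g_integrable' : Integrable (fun u : ℝ => Real.exp (-u ^ 2 / 2) / Real.sqrt (2 * Real.pi)) := by
  have h := (integrable_exp_neg_mul_sq (by norm_num : (0:ℝ) < 1/2)).div_const
    (Real.sqrt (2 * Real.pi))
  convert h using 2 with u
  ring_nf

lemma stdNormalCDF_nonneg (x : ℝ) : 0 ≤ stdNormalCDF x := by
  apply MeasureTheory.setIntegral_nonneg measurableSet_Iic
  intro u _; positivity

lemma stdNormalCDF_le_one (x : ℝ) : stdNormalCDF x ≤ 1 := by
  have h1 : stdNormalCDF x ≤ ∫ u : ℝ, Real.exp (-u ^ 2 / 2) / Real.sqrt (2 * Real.pi) :=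
    MeasureTheory.setIntegral_le_integral g_integrable'
      (Filter.Eventually.of_forall fun u => by positivity)
  have h2 : ∫ u : ℝ, Real.exp (-u ^ 2 / 2) / Real.sqrt (2 * Real.pi) = 1 := by
    have h : ∀ u : ℝ, Real.exp (-u ^ 2 / 2) / Real.sqrt (2 * Real.pi)
        = Real.exp (-(1/2) * u ^ 2) / Real.sqrt (2 * Real.pi) := by
      intro u; ring_nf
    simp_rw [h]
    rw [MeasureTheory.integral_div, integral_gaussian,
      show π / (1/2) = 2 * π by ring, div_self (by positivity)]
  linarith

lemma stdNormalCDF_diff_le (a b : ℝ) (hab : a ≤ b) :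
    stdNormalCDF b - stdNormalCDF a ≤ (b - a) / Real.sqrt (2 * Real.pi) := by
  unfold stdNormalCDF
  rw [intervalIntegral.integral_Iic_sub_Iic g_integrable'.integrableOn g_integrable'.integrableOn,
    intervalIntegral.integral_of_le hab]
  have h1 : ∫ u in Set.Ioc a b, Real.exp (-u ^ 2 / 2) / Real.sqrt (2 * Real.pi)
      ≤ ∫ _u in Set.Ioc a b, 1 / Real.sqrt (2 * Real.pi) := by
    apply MeasureTheory.setIntegral_mono_on g_integrable'.integrableOn
      (MeasureTheory.integrableOn_const (by
        rw [Real.volume_Ioc]; exact ENNReal.ofReal_ne_top)) measurableSet_Ioc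
    intro u _
    gcongr
    exact Real.exp_le_one_iff.2 (by nlinarith [sq_nonneg u])
  refine h1.trans ?_
  rw [MeasureTheory.setIntegral_const, Real.volume_real_Ioc_of_le hab,
    smul_eq_mul]
  apply le_of_eq; ring

theorem bm_level_staying_formula_bound (c ε t : ℝ) (hε : 0 < ε) (ht : 0 < t) :
    stdNormalCDF (c * Real.sqrt t + ε / Real.sqrt t) -
        Real.exp (-2 * c * ε) * stdNormalCDF (c * Real.sqrt t - ε / Real.sqrt t)
      ≤ ε * (Real.sqrt (2 / (Real.pi * t)) + 2 * max c 0) := by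
  have hst : 0 < Real.sqrt t := Real.sqrt_pos.2 ht
  have h2π : 0 < Real.sqrt (2 * π) := Real.sqrt_pos.2 (by positivity)
  set A := c * Real.sqrt t - ε / Real.sqrt t with hA
  set B := c * Real.sqrt t + ε / Real.sqrt t with hB
  have hAB : A ≤ B := by
    rw [hA, hB]
    have : 0 < ε / Real.sqrt t := by positivity
    linarith
  have hdiff := stdNormalCDF_diff_le A B hAB
  have heq : (B - A) / Real.sqrt (2 * π) = ε * Real.sqrt (2 / (π * t)) := by
    have h1 : Real.sqrt (2 / (π * t)) = 2 / (Real.sqrt t * Real.sqrt (2 * π)) := by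
      rw [show (2:ℝ) / (π * t) = (2 / (Real.sqrt t * Real.sqrt (2 * π)))^2 by
        rw [div_pow, mul_pow, Real.sq_sqrt ht.le, Real.sq_sqrt (by positivity : (0:ℝ) ≤ 2 * π)]
        field_simp]
      exact Real.sqrt_sq (by positivity)
    rw [h1, hB, hA]
    field_simp
    ring
  have key : (1 - Real.exp (-2 * c * ε)) * stdNormalCDF A ≤ ε * (2 * max c 0) := by
    have h0 := stdNormalCDF_nonneg A
    have h1 := stdNormalCDF_le_one A
    rcases le_or_gt c 0 with hc | hc
    · rw [max_eq_right hc]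
      have he : (1:ℝ) ≤ Real.exp (-2 * c * ε) := Real.one_le_exp (by nlinarith)
      have := mul_nonpos_of_nonpos_of_nonneg (by linarith : 1 - Real.exp (-2 * c * ε) ≤ 0) h0
      nlinarith
    · rw [max_eq_left hc.le]
      have he : 1 - Real.exp (-2 * c * ε) ≤ 2 * c * ε := by
        nlinarith [Real.add_one_le_exp (-2 * c * ε)]
      nlinarith [mul_le_mul_of_nonneg_right he h0,
        mul_le_mul_of_nonneg_left h1 (by positivity : (0:ℝ) ≤ 2 * c * ε)]
  have expand : stdNormalCDF B - Real.exp (-2 * c * ε) * stdNormalCDF A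
      = (stdNormalCDF B - stdNormalCDF A) + (1 - Real.exp (-2 * c * ε)) * stdNormalCDF A := by
    ring
  rw [expand]
  rw [heq] at hdiff
  linarith [hdiff, key]
end

section
/- Let $\Delta : [0,T) \to \mathbb{R}$ be continuously differentiable with $\Delta(0) = 0$, and suppose that $\Delta'(t) > 0$ at every $t \in [0,T)$ with $\Delta(t) = 0$. Then $\Delta(t) > 0$ for all $t \in (0,T)$. -/
open Set Filter Topology

/-- If `f s = 0` with positive derivative at `s`, then `f` is positive somewhere just right of `s`. -/
lemma exists_pos_right_of_hasDerivAt {f : ℝ → ℝ} {d s u : ℝ}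
    (hd : HasDerivAt f d s) (hs : f s = 0) (hdpos : 0 < d) (hsu : s < u) :
    ∃ x ∈ Set.Ioo s u, 0 < f x := by
  have hslope := hasDerivAt_iff_tendsto_slope.1 hd
  have h1 : ∀ᶠ y in 𝓝[≠] s, 0 < slope f s y :=
    hslope.eventually (eventually_gt_nhds hdpos)
  have h2 : ∀ᶠ y in 𝓝[>] s, 0 < slope f s y :=
    h1.filter_mono (nhdsWithin_mono _ fun y hy => ne_of_gt hy)
  have h3 : Set.Ioo s u ∈ 𝓝[>] s := Ioo_mem_nhdsGT_of_mem ⟨le_refl s, hsu⟩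
  rcases (h2.and (eventually_of_mem h3 fun y hy => hy)).exists with ⟨y, hy1, hy2⟩
  refine ⟨y, hy2, ?_⟩
  have : slope f s y = f y / (y - s) := by
    simp [slope_def_field, hs]
  rw [this] at hy1
  have hys : 0 < y - s := sub_pos.2 hy2.1
  rcases div_pos_iff.1 hy1 with ⟨h, _⟩ | ⟨_, h⟩ <;> linarith

/-- If `f t = 0` with positive derivative at `t`, then `f` is negative somewhere just left of `t`. -/
lemma exists_neg_left_of_hasDerivAt {f : ℝ → ℝ} {d t a : ℝ}
    (hd : HasDerivAt f d t) (ht : f t = 0) (hdpos : 0 < d) (hat : a < t) :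
    ∃ x ∈ Set.Ioo a t, f x < 0 := by
  have hslope := hasDerivAt_iff_tendsto_slope.1 hd
  have h1 : ∀ᶠ y in 𝓝[≠] t, 0 < slope f t y :=
    hslope.eventually (eventually_gt_nhds hdpos)
  have h2 : ∀ᶠ y in 𝓝[<] t, 0 < slope f t y :=
    h1.filter_mono (nhdsWithin_mono _ fun y hy => ne_of_lt hy)
  have h3 : Set.Ioo a t ∈ 𝓝[<] t := Ioo_mem_nhdsLT_of_mem ⟨hat, le_refl t⟩
  rcases (h2.and (eventually_of_mem h3 fun y hy => hy)).exists with ⟨y, hy1, hy2⟩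
  refine ⟨y, hy2, ?_⟩
  have : slope f t y = f y / (y - t) := by
    simp [slope_def_field, ht]
  rw [this] at hy1
  have hyt : y - t < 0 := sub_neg.2 hy2.2
  rcases div_pos_iff.1 hy1 with ⟨_, h⟩ | ⟨h, _⟩ <;> linarith

/-- A `C¹` function vanishing at `0` whose derivative is strictly positive at every zero
must be strictly positive on `(0, T)`. -/
theorem pos_of_deriv_pos_at_zeros
    (T : ℝ) (Δ Δ' : ℝ → ℝ)
    (hderiv : ∀ t ∈ Set.Ico (0:ℝ) T, HasDerivAt Δ (Δ' t) t)
    (hcont : ContinuousOn Δ' (Set.Ico 0 T))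
    (h0 : Δ 0 = 0)
    (hpos : ∀ t ∈ Set.Ico (0:ℝ) T, Δ t = 0 → 0 < Δ' t) :
    ∀ t ∈ Set.Ioo (0:ℝ) T, 0 < Δ t := by
  intro t ht
  obtain ⟨ht0, htT⟩ := ht
  by_contra hle
  push_neg at hle
  have htmem : t ∈ Set.Ico (0:ℝ) T := ⟨le_of_lt ht0, htT⟩
  -- continuity of Δ on Ico 0 T
  have hcontΔ : ContinuousOn Δ (Set.Ico 0 T) := fun x hx =>
    (hderiv x hx).continuousAt.continuousWithinAt
  -- find u ∈ (0, t] with Δ u < 0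
  obtain ⟨u, hu0, hut, hune⟩ : ∃ u, 0 < u ∧ u ≤ t ∧ Δ u < 0 := by
    rcases lt_or_eq_of_le hle with h | h
    · exact ⟨t, ht0, le_refl t, h⟩
    · obtain ⟨x, hx, hxneg⟩ :=
        exists_neg_left_of_hasDerivAt (hderiv t htmem) h
          (hpos t htmem h) ht0
      exact ⟨x, hx.1, le_of_lt hx.2, hxneg⟩
  have huT : u < T := lt_of_le_of_lt hut htT
  have hIccsub : Set.Icc 0 u ⊆ Set.Ico 0 T := fun x hx => ⟨hx.1, lt_of_le_of_lt hx.2 huT⟩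
  -- the set of zeros in [0, u]
  set S : Set ℝ := {x | x ∈ Set.Icc (0:ℝ) u ∧ Δ x = 0} with hS
  have hSne : S.Nonempty := ⟨0, ⟨le_refl 0, le_of_lt hu0⟩, h0⟩
  have hSbdd : BddAbove S := ⟨u, fun x hx => hx.1.2⟩
  have hSclosed : IsClosed S := by
    have : S = Set.Icc 0 u ∩ Δ ⁻¹' {0} := by
      ext x; simp only [hS, Set.mem_setOf_eq, Set.mem_inter_iff, Set.mem_preimage, Set.mem_singleton_iff]
    rw [this]
    exact (hcontΔ.mono hIccsub).preimage_isClosed_of_isClosed isClosed_Icc isClosed_singleton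
  have hsS : sSup S ∈ S := (isCompact_Icc.of_isClosed_subset hSclosed (fun x hx => hx.1)).sSup_mem hSne
  set s := sSup S with hsdef
  obtain ⟨⟨hs0, hsu⟩, hsz⟩ := hsS
  have hsu' : s < u := lt_of_le_of_ne hsu (fun h => by rw [h] at hsz; linarith)
  have hsmem : s ∈ Set.Ico 0 T := ⟨hs0, lt_trans hsu' huT⟩
  -- find x ∈ (s, u) with Δ x > 0
  obtain ⟨x, hx, hxpos⟩ :=
    exists_pos_right_of_hasDerivAt (hderiv s hsmem) hsz (hpos s hsmem hsz) hsu'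
  -- IVT on [x, u] gives a zero z ∈ (x, u)
  have hcxu : ContinuousOn Δ (Set.Icc x u) :=
    hcontΔ.mono fun y hy => hIccsub ⟨le_trans (le_trans hs0 (le_of_lt hx.1)) hy.1, hy.2⟩
  have hzero : (0:ℝ) ∈ Set.Ioo (Δ u) (Δ x) := ⟨hune, hxpos⟩
  obtain ⟨z, hz, hzval⟩ := intermediate_value_Ioo' (le_of_lt hx.2) hcxu hzero
  have hzS : z ∈ S := ⟨⟨le_trans hs0 (le_of_lt (lt_trans hx.1 hz.1)), le_of_lt hz.2⟩, hzval⟩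
  have : z ≤ s := le_csSup hSbdd hzS
  linarith [hx.1, hz.1]
end

section
/- Let $m \ge 1$, $K \ge 0$, $r > 0$, and $h \in (0, r/K)$ (with $r/K := \infty$ if $K = 0$). For standard $m$-dimensional Brownian motion $\vect{W}$ started at $0$, the probability that $\vect{W}$ exits the shrinking ball before time $h$ satisfies $\mathbb{P}(\exists s \in [0,h]: \|\vect{W}_s\| \ge r - Ks) \le 2m \exp(rK/m - r^2/(2hm))$. -/
open MeasureTheory ProbabilityTheory

/-- `W` is a standard one-dimensional Brownian motion under `P`. -/
def IsStandardBM {Ω : Type*} [MeasurableSpace Ω] (P : Measure Ω) (W : ℝ → Ω → ℝ) : Prop :=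
  (∀ t, Measurable (W t)) ∧
  (∀ᵐ ω ∂P, W 0 ω = 0) ∧
  (∀ᵐ ω ∂P, Continuous fun t => W t ω) ∧
  (∀ s t : ℝ, 0 ≤ s → s ≤ t →
    Measure.map (fun ω => W t ω - W s ω) P = gaussianReal 0 (t - s).toNNReal) ∧
  (∀ n : ℕ, ∀ t : Fin (n + 1) → ℝ, Monotone t → (∀ i, 0 ≤ t i) →
    iIndepFun
      (fun (i : Fin n) ω => W (t i.succ) ω - W (t i.castSucc) ω) P)

/-- `W` is a standard `m`-dimensional Brownian motion under `P`: each coordinate is a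
standard one-dimensional Brownian motion and the coordinate processes are independent. -/
def IsStandardBMn {Ω : Type*} [MeasurableSpace Ω] (m : ℕ) (P : Measure Ω)
    (W : ℝ → Ω → EuclideanSpace ℝ (Fin m)) : Prop :=
  (∀ i : Fin m, IsStandardBM P fun t ω => W t ω i) ∧
  iIndepFun (fun (i : Fin m) ω t => W t ω i) P


open Real
open scoped NNReal ENNReal


lemma pdf_shift (v : ℝ≥0) (hv : v ≠ 0) (l x : ℝ) :
    Real.exp (l * x) * gaussianPDFReal 0 v x
      = Real.exp (l ^ 2 * v / 2) * gaussianPDFReal (l * v) v x := by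
  unfold gaussianPDFReal
  have hv' : (0:ℝ) < v := lt_of_le_of_ne (NNReal.coe_nonneg v) (by exact_mod_cast (Ne.symm hv))
  rw [mul_left_comm, mul_left_comm (Real.exp (l ^ 2 * v / 2))]
  congr 1
  rw [← Real.exp_add, ← Real.exp_add]
  congr 1
  field_simp
  ring

lemma integrable_exp_gaussian (v : ℝ≥0) (l : ℝ) :
    Integrable (fun x => Real.exp (l * x)) (gaussianReal 0 v) := by
  by_cases hv : v = 0
  · rw [hv, gaussianReal_zero_var]
    exact (integrable_const (Real.exp (l * 0))).congr (ae_eq_dirac fun x => Real.exp (l * x)).symm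
  rw [gaussianReal_of_var_ne_zero _ hv, gaussianPDF_def]
  rw [integrable_withDensity_iff (measurable_gaussianPDFReal 0 v).ennreal_ofReal
    (ae_of_all _ fun x => ENNReal.ofReal_lt_top)]
  have : (fun x => Real.exp (l * x) * (ENNReal.ofReal (gaussianPDFReal 0 v x)).toReal)
      = fun x => Real.exp (l ^ 2 * v / 2) * gaussianPDFReal (l * v) v x := by
    ext x
    rw [ENNReal.toReal_ofReal (gaussianPDFReal_nonneg 0 v x), pdf_shift v hv]
  rw [this]
  exact (integrable_gaussianPDFReal _ _).const_mul _

lemma integral_exp_gaussian (v : ℝ≥0) (l : ℝ) :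
    ∫ x, Real.exp (l * x) ∂(gaussianReal 0 v) = Real.exp (l ^ 2 * v / 2) := by
  by_cases hv : v = 0
  · simp [hv]
  rw [gaussianReal_of_var_ne_zero _ hv, gaussianPDF_def]
  have h1 : (fun x => ENNReal.ofReal (gaussianPDFReal 0 v x))
      = fun x => ((gaussianPDFReal 0 v x).toNNReal : ℝ≥0∞) := by
    ext x; rw [ENNReal.ofReal]
  rw [h1, integral_withDensity_eq_integral_smul
    (by exact (measurable_gaussianPDFReal 0 v).real_toNNReal) _]
  have h2 : (fun x => (gaussianPDFReal 0 v x).toNNReal • Real.exp (l * x))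
      = fun x => Real.exp (l ^ 2 * v / 2) * gaussianPDFReal (l * v) v x := by
    ext x
    rw [NNReal.smul_def, smul_eq_mul, Real.coe_toNNReal _ (gaussianPDFReal_nonneg 0 v x),
      mul_comm, pdf_shift v hv]
  rw [h2, integral_const_mul, integral_gaussianPDFReal_eq_one _ hv, mul_one]

lemma exp_mul_measurable (l : ℝ) : Measurable fun x : ℝ => Real.exp (l * x) :=
  Real.measurable_exp.comp (measurable_const.mul measurable_id)

lemma integrable_exp_comp {Ω : Type*} [MeasurableSpace Ω] {P : Measure Ω} {X : Ω → ℝ}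
    (hX : Measurable X) {v : ℝ≥0} (hmap : Measure.map X P = gaussianReal 0 v) (l : ℝ) :
    Integrable (fun ω => Real.exp (l * X ω)) P := by
  have h1 := integrable_exp_gaussian v l
  rw [← hmap] at h1
  exact (integrable_map_measure (exp_mul_measurable l).aestronglyMeasurable
    hX.aemeasurable).mp h1

lemma integral_exp_comp {Ω : Type*} [MeasurableSpace Ω] {P : Measure Ω} {X : Ω → ℝ}
    (hX : Measurable X) {v : ℝ≥0} (hmap : Measure.map X P = gaussianReal 0 v) (l : ℝ) :
    ∫ ω, Real.exp (l * X ω) ∂P = Real.exp (l ^ 2 * v / 2) := by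
  have h1 := integral_exp_gaussian v l
  rw [← hmap] at h1
  rw [integral_map hX.aemeasurable (exp_mul_measurable l).aestronglyMeasurable] at h1
  exact h1


set_option maxHeartbeats 2000000 in
lemma discrete_doob {Ω : Type*} [MeasurableSpace Ω] (P : Measure Ω) [IsProbabilityMeasure P]
    {B : ℝ → Ω → ℝ} (hB : IsStandardBM P B) {h c : ℝ} (hh : 0 < h) (hc : 0 < c)
    (n : ℕ) (t : Fin (n+1) → ℝ) (ht : Monotone t) (ht0 : t 0 = 0) (hth : ∀ i, t i ≤ h) :
    P {ω | ∃ k, c ≤ B (t k) ω} ≤ ENNReal.ofReal (Real.exp (-c^2/(2*h))) := by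
  classical
  obtain ⟨hmeas, hzero, hcont, hlaw, hindep⟩ := hB
  have htnn : ∀ i, 0 ≤ t i := fun i => ht0 ▸ ht (Fin.zero_le i)
  set l : ℝ := c / h with hl
  have hl0 : 0 < l := div_pos hc hh
  set X : Fin n → Ω → ℝ := fun j ω => B (t j.succ) ω - B (t j.castSucc) ω with hXdef
  clear_value X
  have hXmeas : ∀ j, Measurable (X j) := fun j => by
    rw [hXdef]; exact (hmeas _).sub (hmeas _)
  have hIndep : iIndepFun X P := by
    rw [hXdef]; exact hindep n t ht htnn
  set S : Fin (n+1) → Ω → ℝ :=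
    fun k ω => ∑ j ∈ Finset.univ.filter (fun j : Fin n => (j:ℕ) < (k:ℕ)), X j ω with hSdef
  clear_value S
  have hSmeas : ∀ k, Measurable (S k) := fun k => by
    simp only [hSdef]
    exact Finset.measurable_sum _ (fun j _ => hXmeas j)
  -- telescoping
  have htelaux : ∀ (p : ℕ) (hp : p < n+1) (ω : Ω),
      (∑ j ∈ Finset.univ.filter (fun j : Fin n => (j:ℕ) < p), X j ω)
        = B (t ⟨p, hp⟩) ω - B (t 0) ω := by
    intro p
    induction p with
    | zero =>
      intro hp ω
      have : Finset.univ.filter (fun j : Fin n => (j:ℕ) < 0) = ∅ := by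
        ext j; simp
      rw [this]
      have h0 : (⟨0, hp⟩ : Fin (n+1)) = 0 := rfl
      simp [h0]
    | succ p ih =>
      intro hp ω
      have hpn : p < n := by omega
      have hins : Finset.univ.filter (fun j : Fin n => (j:ℕ) < p + 1)
          = insert (⟨p, hpn⟩ : Fin n) (Finset.univ.filter (fun j : Fin n => (j:ℕ) < p)) := by
        ext j
        simp only [Finset.mem_filter, Finset.mem_univ, true_and, Finset.mem_insert, Fin.ext_iff]
        omega
      rw [hins, Finset.sum_insert (by simp)]
      rw [ih (by omega) ω]
      have hsucc : (⟨p, hpn⟩ : Fin n).succ = (⟨p+1, hp⟩ : Fin (n+1)) := rfl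
      have hcast : (⟨p, hpn⟩ : Fin n).castSucc = (⟨p, by omega⟩ : Fin (n+1)) := rfl
      rw [hXdef]
      simp only [hsucc, hcast]
      ring
  have htel : ∀ (k : Fin (n+1)) (ω : Ω), S k ω = B (t k) ω - B (t 0) ω := by
    intro k ω
    have h5 := htelaux (k:ℕ) k.isLt ω
    rw [Fin.eta] at h5
    simp only [hSdef]
    exact h5
  -- laws
  have hlawS : ∀ k : Fin (n+1),
      Measure.map (fun ω => B (t k) ω - B (t 0) ω) P = gaussianReal 0 (t k - t 0).toNNReal :=
    fun k => hlaw (t 0) (t k) (htnn 0) (ht (Fin.zero_le k))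
  have hintS : ∀ k : Fin (n+1), Integrable (fun ω => Real.exp (l * S k ω)) P := by
    intro k
    have : (fun ω => Real.exp (l * S k ω))
        = fun ω => Real.exp (l * (B (t k) ω - B (t 0) ω)) := by
      funext ω; rw [htel]
    rw [this]
    exact integrable_exp_comp ((hmeas _).sub (hmeas _)) (hlawS k) l
  have hintexpS : ∀ k : Fin (n+1),
      ∫ ω, Real.exp (l * S k ω) ∂P = Real.exp (l ^ 2 * ((t k - t 0).toNNReal : ℝ) / 2) := by
    intro k
    have : (fun ω => Real.exp (l * S k ω))
        = fun ω => Real.exp (l * (B (t k) ω - B (t 0) ω)) := by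
      funext ω; rw [htel]
    rw [this]
    exact integral_exp_comp ((hmeas _).sub (hmeas _)) (hlawS k) l
  -- the events
  set G : Fin (n+1) → Set Ω :=
    fun k => {ω | c ≤ S k ω} ∩ ⋂ (j : Fin (n+1)), ⋂ (_ : j < k), {ω | S j ω < c} with hGdef
  clear_value G
  have hGmeas : ∀ k, MeasurableSet (G k) := fun k => by
    simp only [hGdef]
    exact (measurableSet_le measurable_const (hSmeas k)).inter
      (MeasurableSet.iInter fun j => MeasurableSet.iInter fun _ =>
        measurableSet_lt (hSmeas j) measurable_const)
  have hGmem : ∀ k ω, ω ∈ G k ↔ (c ≤ S k ω ∧ ∀ j, j < k → S j ω < c) := by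
    intro k ω
    simp [hGdef, Set.mem_iInter]
  have hGdisj : Pairwise (Function.onFun Disjoint G) := by
    have haux : ∀ k k' : Fin (n+1), k < k' → Disjoint (G k) (G k') := by
      intro k k' hkk'
      rw [Set.disjoint_left]
      intro ω hω hω'
      have h1 := ((hGmem k ω).mp hω).1
      have h2 := ((hGmem k' ω).mp hω').2 k hkk'
      linarith
    intro k k' hne
    rcases lt_or_gt_of_ne hne with hlt | hgt
    · exact haux k k' hlt
    · exact (haux k' k hgt).symm
  have hcover : {ω | ∃ k, c ≤ S k ω} = ⋃ k, G k := by
    ext ω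
    simp only [Set.mem_setOf_eq, Set.mem_iUnion]
    constructor
    · rintro ⟨k, hk⟩
      have hex : ∃ p : ℕ, ∃ hp : p < n+1, c ≤ S ⟨p, hp⟩ ω := ⟨k, k.isLt, by rw [Fin.eta]; exact hk⟩
      obtain ⟨hp, hcp⟩ := Nat.find_spec hex
      refine ⟨⟨Nat.find hex, hp⟩, (hGmem _ ω).mpr ⟨hcp, ?_⟩⟩
      intro j hj
      by_contra hcon
      push_neg at hcon
      exact Nat.find_min hex (m := (j:ℕ)) hj ⟨j.isLt, by rw [Fin.eta]; exact hcon⟩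
    · rintro ⟨k, hk⟩
      exact ⟨k, ((hGmem k ω).mp hk).1⟩
  -- key inequality per k
  have key : ∀ k : Fin (n+1), Real.exp (l*c) * (P (G k)).toReal
      ≤ ∫ ω in G k, Real.exp (l * S (Fin.last n) ω) ∂P := by
    intro k
    set Sk : Finset (Fin n) := Finset.univ.filter (fun j : Fin n => (j:ℕ) < (k:ℕ)) with hSk
    set Tk : Finset (Fin n) := Finset.univ.filter (fun j : Fin n => ¬ (j:ℕ) < (k:ℕ)) with hTk
    clear_value Sk Tk
    have hdisjST : Disjoint Sk Tk := by
      rw [hSk, hTk]; exact Finset.disjoint_filter_filter_not _ _ _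
    set pS : Fin (n+1) → (Sk → ℝ) → ℝ :=
      fun j y => ∑ i ∈ Finset.univ.filter (fun i : Sk => ((i : Fin n) : ℕ) < (j:ℕ)), y i with hpS
    clear_value pS
    have hpSmeas : ∀ j, Measurable (pS j) := fun j => by
      simp only [hpS]
      exact Finset.measurable_sum _ fun i _ => measurable_pi_apply i
    have hco1 : ∀ (j : Fin (n+1)), j ≤ k → ∀ ω, pS j (fun i : Sk => X (i : Fin n) ω) = S j ω := by
      intro j hj ω
      rw [hpS]
      simp only []
      rw [Finset.sum_filter]
      have hcs : (∑ i : Sk, if ((i : Fin n) : ℕ) < (j:ℕ) then X (i : Fin n) ω else 0)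
          = ∑ i ∈ Sk, (if (i : ℕ) < (j:ℕ) then X i ω else 0) :=
        Finset.sum_coe_sort Sk (fun i => if (i:ℕ) < (j:ℕ) then X i ω else 0)
      rw [hcs, ← Finset.sum_filter, hSdef]
      simp only []
      congr 1
      rw [hSk, Finset.filter_filter]
      ext i
      simp only [Finset.mem_filter, Finset.mem_univ, true_and]
      have hjk : (j:ℕ) ≤ (k:ℕ) := hj
      omega
    have hco2 : ∀ ω, (∑ i : Tk, X (i : Fin n) ω) = S (Fin.last n) ω - S k ω := by
      intro ω
      have h1 : (∑ i : Tk, X (i : Fin n) ω) = ∑ i ∈ Tk, X i ω := Finset.sum_coe_sort Tk (fun i => X i ω)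
      have h2 : S (Fin.last n) ω = ∑ i ∈ Finset.univ, X i ω := by
        rw [hSdef]
        simp only []
        congr 1
        ext i
        simp [Fin.val_last, i.isLt]
      have h3 := Finset.sum_filter_add_sum_filter_not Finset.univ
        (fun j : Fin n => (j:ℕ) < (k:ℕ)) (fun i => X i ω)
      rw [h1, h2, hTk]
      rw [hSdef]
      simp only []
      linarith [h3]
    set A : Set (Sk → ℝ) :=
      {y | c ≤ pS k y} ∩ ⋂ (j : Fin (n+1)), ⋂ (_ : j < k), {y | pS j y < c} with hA
    clear_value A
    have hAmeas : MeasurableSet A := by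
      rw [hA]
      exact (measurableSet_le measurable_const (hpSmeas k)).inter
        (MeasurableSet.iInter fun j => MeasurableSet.iInter fun _ =>
          measurableSet_lt (hpSmeas j) measurable_const)
    set φ₁ : (Sk → ℝ) → ℝ := fun y => Set.indicator A (fun y => Real.exp (l * pS k y)) y with hφ₁
    clear_value φ₁
    have hφ₁meas : Measurable φ₁ := by
      rw [hφ₁]
      exact (Real.measurable_exp.comp ((hpSmeas k).const_mul l)).indicator hAmeas
    set φ₂ : (Tk → ℝ) → ℝ := fun y => Real.exp (l * ∑ i, y i) with hφ₂
    clear_value φ₂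
    have hφ₂meas : Measurable φ₂ := by
      rw [hφ₂]
      exact Real.measurable_exp.comp
        ((Finset.measurable_sum _ fun i _ => measurable_pi_apply i).const_mul l)
    set F1 : Ω → ℝ := fun ω => Set.indicator (G k) (fun ω => Real.exp (l * S k ω)) ω with hF1
    set F2 : Ω → ℝ := fun ω => Real.exp (l * (S (Fin.last n) ω - S k ω)) with hF2
    clear_value F1 F2
    have hmemA : ∀ ω, ((fun i : Sk => X (i : Fin n) ω) ∈ A) ↔ ω ∈ G k := by
      intro ω
      rw [hA]
      simp only [Set.mem_inter_iff, Set.mem_setOf_eq, Set.mem_iInter]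
      rw [hGmem]
      constructor
      · rintro ⟨h1, h2⟩
        refine ⟨by rwa [hco1 k le_rfl ω] at h1, fun j hj => ?_⟩
        have := h2 j hj
        rwa [hco1 j hj.le ω] at this
      · rintro ⟨h1, h2⟩
        exact ⟨by rwa [hco1 k le_rfl ω], fun j hj => by rw [hco1 j hj.le ω]; exact h2 j hj⟩
    have hcomp1 : F1 = φ₁ ∘ (fun ω (i : Sk) => X (i : Fin n) ω) := by
      funext ω
      simp only [Function.comp_apply, hF1, hφ₁]
      by_cases hω : ω ∈ G k
      · rw [Set.indicator_of_mem hω, Set.indicator_of_mem ((hmemA ω).mpr hω), hco1 k le_rfl ω]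
      · rw [Set.indicator_of_notMem hω,
          Set.indicator_of_notMem (fun hmem => hω ((hmemA ω).mp hmem))]
    have hcomp2 : F2 = φ₂ ∘ (fun ω (i : Tk) => X (i : Fin n) ω) := by
      funext ω
      simp only [Function.comp_apply, hF2, hφ₂]
      rw [hco2 ω]
    have hindF : IndepFun F1 F2 P := by
      rw [hcomp1, hcomp2]
      exact (hIndep.indepFun_finset Sk Tk hdisjST hXmeas).comp hφ₁meas hφ₂meas
    have hiF1 : Integrable F1 P := by
      rw [hF1]
      exact (hintS k).indicator (hGmeas k)
    have hF2eq : F2 = fun ω => Real.exp (l * (B (t (Fin.last n)) ω - B (t k) ω)) := by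
      funext ω
      simp only [hF2]
      rw [htel, htel]
      exact congrArg Real.exp (by ring)
    have hlawF2 := hlaw (t k) (t (Fin.last n)) (htnn k) (ht (Fin.le_last k))
    have hiF2 : Integrable F2 P := by
      rw [hF2eq]
      exact integrable_exp_comp ((hmeas _).sub (hmeas _)) hlawF2 l
    have hIF2 : (1:ℝ) ≤ ∫ ω, F2 ω ∂P := by
      rw [hF2eq, integral_exp_comp (X := fun ω => B (t (Fin.last n)) ω - B (t k) ω) ((hmeas _).sub (hmeas _)) hlawF2 l]
      apply Real.one_le_exp
      positivity
    have hstep1 : Real.exp (l*c) * (P (G k)).toReal ≤ ∫ ω, F1 ω ∂P := by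
      have hind := integral_indicator_const (μ := P) (Real.exp (l*c)) (hGmeas k)
      have hmono : ∀ ω, Set.indicator (G k) (fun _ => Real.exp (l*c)) ω ≤ F1 ω := by
        intro ω
        simp only [hF1]
        by_cases hω : ω ∈ G k
        · rw [Set.indicator_of_mem hω, Set.indicator_of_mem hω]
          exact Real.exp_le_exp.mpr (mul_le_mul_of_nonneg_left ((hGmem k ω).mp hω).1 hl0.le)
        · rw [Set.indicator_of_notMem hω, Set.indicator_of_notMem hω]
      calc Real.exp (l*c) * (P (G k)).toReal
          = ∫ ω, Set.indicator (G k) (fun _ => Real.exp (l*c)) ω ∂P := by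
            rw [hind, smul_eq_mul, mul_comm]; rfl
        _ ≤ ∫ ω, F1 ω ∂P :=
            integral_mono ((integrable_const _).indicator (hGmeas k)) hiF1 hmono
    have hF1nonneg : (0:ℝ) ≤ ∫ ω, F1 ω ∂P := by
      apply integral_nonneg
      intro ω
      simp only [hF1]
      exact Set.indicator_nonneg (fun ω _ => Real.exp_nonneg _) ω
    have hstep2 : ∫ ω, F1 ω ∂P ≤ (∫ ω, F1 ω ∂P) * ∫ ω, F2 ω ∂P :=
      le_mul_of_one_le_right hF1nonneg hIF2
    have hstep3 : (∫ ω, F1 ω ∂P) * ∫ ω, F2 ω ∂P = ∫ ω, F1 ω * F2 ω ∂P :=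
      (hindF.integral_fun_mul_eq_mul_integral hiF1.aestronglyMeasurable hiF2.aestronglyMeasurable).symm
    have hprod : (fun ω => F1 ω * F2 ω)
        = fun ω => Set.indicator (G k) (fun ω => Real.exp (l * S (Fin.last n) ω)) ω := by
      funext ω
      by_cases hω : ω ∈ G k
      · simp only [hF1]
        rw [Set.indicator_of_mem hω, Set.indicator_of_mem hω, hF2, ← Real.exp_add]
        congr 1
        ring
      · simp only [hF1]
        rw [Set.indicator_of_notMem hω, Set.indicator_of_notMem hω, zero_mul]
    have hstep4 : ∫ ω, F1 ω * F2 ω ∂P = ∫ ω in G k, Real.exp (l * S (Fin.last n) ω) ∂P := by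
      rw [hprod, integral_indicator (hGmeas k)]
    linarith
  -- summing over k
  have hPE : P {ω | ∃ k, c ≤ S k ω} = ∑ k, P (G k) := by
    rw [hcover, measure_iUnion hGdisj hGmeas, tsum_fintype]
  have hMint := hintS (Fin.last n)
  have hsum : ∑ k, ∫ ω in G k, Real.exp (l * S (Fin.last n) ω) ∂P
      = ∫ ω in ⋃ k, G k, Real.exp (l * S (Fin.last n) ω) ∂P := by
    rw [integral_iUnion hGmeas hGdisj hMint.integrableOn, tsum_fintype]
  have hle1 : ∫ ω in ⋃ k, G k, Real.exp (l * S (Fin.last n) ω) ∂P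
      ≤ ∫ ω, Real.exp (l * S (Fin.last n) ω) ∂P :=
    setIntegral_le_integral hMint (ae_of_all _ fun ω => Real.exp_nonneg _)
  have hval : ∫ ω, Real.exp (l * S (Fin.last n) ω) ∂P ≤ Real.exp (l^2 * h / 2) := by
    rw [hintexpS (Fin.last n)]
    apply Real.exp_le_exp.mpr
    have hvle : ((t (Fin.last n) - t 0).toNNReal : ℝ) ≤ h := by
      rw [Real.coe_toNNReal']
      exact max_le (by linarith [hth (Fin.last n), htnn 0]) hh.le
    nlinarith [sq_nonneg l, NNReal.coe_nonneg (t (Fin.last n) - t 0).toNNReal]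
  have htotal : Real.exp (l*c) * (P {ω | ∃ k, c ≤ S k ω}).toReal ≤ Real.exp (l^2*h/2) := by
    have htr : (P {ω | ∃ k, c ≤ S k ω}).toReal = ∑ k, (P (G k)).toReal := by
      rw [hPE, ENNReal.toReal_sum]
      intro k _
      exact measure_ne_top P _
    rw [htr, Finset.mul_sum]
    calc ∑ k, Real.exp (l*c) * (P (G k)).toReal
        ≤ ∑ k, ∫ ω in G k, Real.exp (l * S (Fin.last n) ω) ∂P :=
          Finset.sum_le_sum (fun k _ => key k)
      _ = ∫ ω in ⋃ k, G k, Real.exp (l * S (Fin.last n) ω) ∂P := hsum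
      _ ≤ ∫ ω, Real.exp (l * S (Fin.last n) ω) ∂P := hle1
      _ ≤ Real.exp (l^2 * h / 2) := hval
  have hPfin : (P {ω | ∃ k, c ≤ S k ω}).toReal ≤ Real.exp (-c^2/(2*h)) := by
    have hexp_pos := Real.exp_pos (l*c)
    have h2 : Real.exp (l^2*h/2) / Real.exp (l*c) = Real.exp (-c^2/(2*h)) := by
      rw [← Real.exp_sub]
      congr 1
      rw [hl]
      field_simp
      ring
    rw [← h2, le_div_iff₀ hexp_pos, mul_comm]
    exact htotal
  have hae : {ω | ∃ k, c ≤ B (t k) ω} ≤ᵐ[P] {ω | ∃ k, c ≤ S k ω} := by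
    filter_upwards [hzero] with ω hω0
    intro hmemb
    obtain ⟨k, hk⟩ := hmemb
    refine ⟨k, ?_⟩
    rw [htel, ht0, hω0, sub_zero]
    exact hk
  calc P {ω | ∃ k, c ≤ B (t k) ω} ≤ P {ω | ∃ k, c ≤ S k ω} := measure_mono_ae hae
    _ ≤ ENNReal.ofReal (Real.exp (-c^2/(2*h))) := by
      rw [← ENNReal.ofReal_toReal (measure_ne_top P _)]
      exact ENNReal.ofReal_le_ofReal hPfin

set_option maxHeartbeats 1000000 in
lemma bm_sup_bound {Ω : Type*} [MeasurableSpace Ω] (P : Measure Ω) [IsProbabilityMeasure P]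
    {B : ℝ → Ω → ℝ} (hB : IsStandardBM P B) {h c : ℝ} (hh : 0 < h) (hc : 0 < c) :
    P {ω | ∃ s ∈ Set.Icc (0:ℝ) h, c ≤ B s ω} ≤ ENNReal.ofReal (Real.exp (-c^2/(2*h))) := by
  classical
  have main : ∀ δ, δ ∈ Set.Ioo (0:ℝ) c →
      P {ω | ∃ s ∈ Set.Icc (0:ℝ) h, c ≤ B s ω}
        ≤ ENNReal.ofReal (Real.exp (-(c-δ)^2/(2*h))) := by
    intro δ hδ
    have hc'0 : 0 < c - δ := by linarith [hδ.2]
    set D : Set ℝ := Set.Icc (0:ℝ) h ∩ Set.range (fun q : ℚ => (q:ℝ)) with hD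
    have hDcnt : D.Countable := (Set.countable_range _).mono Set.inter_subset_right
    have hD0 : (0:ℝ) ∈ D := ⟨⟨le_rfl, hh.le⟩, ⟨0, by norm_num⟩⟩
    obtain ⟨e, hecov⟩ := Set.Countable.exists_eq_range hDcnt ⟨0, hD0⟩
    have heD : ∀ i, e i ∈ D := fun i => by rw [hecov]; exact ⟨i, rfl⟩
    -- a.e. inclusion into rational-time event
    have hsub : {ω | ∃ s ∈ Set.Icc (0:ℝ) h, c ≤ B s ω}
        ≤ᵐ[P] {ω | ∃ x ∈ D, c - δ ≤ B x ω} := by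
      filter_upwards [hB.2.2.1] with ω hcnt
      intro hmem
      obtain ⟨s, hs, hcs⟩ := hmem
      obtain ⟨ε, hε0, hball⟩ := Metric.continuous_iff.mp hcnt s δ hδ.1
      have hαβ : max (s - ε) 0 < min (s + ε) h := by
        rcases hs with ⟨hs0, hsh⟩
        apply max_lt <;> apply lt_min <;> linarith
      obtain ⟨q, hq1, hq2⟩ := exists_rat_btwn hαβ
      have hq0 : (0:ℝ) ≤ q := le_of_lt (lt_of_le_of_lt (le_max_right _ _) hq1)
      have hqh : (q:ℝ) ≤ h := le_of_lt (lt_of_lt_of_le hq2 (min_le_right _ _))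
      have hdist : dist (q:ℝ) s < ε := by
        rw [Real.dist_eq, abs_lt]
        constructor
        · have := le_max_left (s - ε) 0; linarith
        · have := min_le_left (s + ε) h; linarith
      have hBq := hball (q:ℝ) hdist
      rw [Real.dist_eq, abs_lt] at hBq
      exact ⟨(q:ℝ), ⟨⟨hq0, hqh⟩, ⟨q, rfl⟩⟩, by linarith [hBq.1]⟩
    -- finite grids
    set FN : ℕ → Finset ℝ := fun N => insert (0:ℝ) ((Finset.range (N+1)).image e) with hFN
    set E : ℕ → Set Ω := fun N => {ω | ∃ x ∈ FN N, c - δ ≤ B x ω} with hE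
    have hEmono : Monotone E := by
      intro N M hNM ω hω
      obtain ⟨x, hx, hcx⟩ := hω
      refine ⟨x, ?_, hcx⟩
      simp only [hFN, Finset.mem_insert, Finset.mem_image, Finset.mem_range] at hx ⊢
      rcases hx with h0 | ⟨i, hi, hix⟩
      · exact Or.inl h0
      · exact Or.inr ⟨i, by omega, hix⟩
    have hcup : {ω | ∃ x ∈ D, c - δ ≤ B x ω} ⊆ ⋃ N, E N := by
      intro ω hω
      obtain ⟨x, hxD, hcx⟩ := hω
      rw [hecov] at hxD
      obtain ⟨i, rfl⟩ := hxD
      refine Set.mem_iUnion.mpr ⟨i, ⟨e i, ?_, hcx⟩⟩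
      simp only [hFN, Finset.mem_insert, Finset.mem_image, Finset.mem_range]
      exact Or.inr ⟨i, by omega, rfl⟩
    have hmemFN : ∀ N x, x ∈ FN N → 0 ≤ x ∧ x ≤ h := by
      intro N x hx
      simp only [hFN, Finset.mem_insert, Finset.mem_image, Finset.mem_range] at hx
      rcases hx with rfl | ⟨i, _, rfl⟩
      · exact ⟨le_rfl, hh.le⟩
      · exact ⟨(heD i).1.1, (heD i).1.2⟩
    have hEbound : ∀ N, P (E N) ≤ ENNReal.ofReal (Real.exp (-(c-δ)^2/(2*h))) := by
      intro N
      have h0mem : (0:ℝ) ∈ FN N := by simp [hFN]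
      have hcard : (FN N).card = ((FN N).card - 1) + 1 :=
        (Nat.succ_pred_eq_of_pos (Finset.card_pos.mpr ⟨0, h0mem⟩)).symm
      set n := (FN N).card - 1 with hn
      let σ := (FN N).orderIsoOfFin hcard
      set tt : Fin (n+1) → ℝ := fun k => (σ k : ℝ) with htt
      have httmem : ∀ k, tt k ∈ FN N := fun k => (σ k).2
      have httmono : Monotone tt := fun a b hab => Subtype.coe_le_coe.mpr (σ.monotone hab)
      have htt0 : tt 0 = 0 := by
        have h1 : tt 0 ≤ 0 := by
          have h2 : (σ (σ.symm ⟨0, h0mem⟩) : ℝ) = 0 := by rw [OrderIso.apply_symm_apply]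
          calc tt 0 ≤ tt (σ.symm ⟨0, h0mem⟩) := httmono (Fin.zero_le _)
            _ = 0 := h2
        exact le_antisymm h1 (hmemFN N _ (httmem 0)).1
      have htth : ∀ k, tt k ≤ h := fun k => (hmemFN N _ (httmem k)).2
      have hEeq : E N = {ω | ∃ k : Fin (n+1), c - δ ≤ B (tt k) ω} := by
        ext ω
        simp only [hE, Set.mem_setOf_eq]
        constructor
        · rintro ⟨x, hx, hcx⟩
          refine ⟨σ.symm ⟨x, hx⟩, ?_⟩
          have : tt (σ.symm ⟨x, hx⟩) = x := by
            simp only [htt]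
            rw [OrderIso.apply_symm_apply]
          rwa [this]
        · rintro ⟨k, hk⟩
          exact ⟨tt k, httmem k, hk⟩
      rw [hEeq]
      exact discrete_doob P ⟨hB.1, hB.2.1, hB.2.2.1, hB.2.2.2.1, hB.2.2.2.2⟩ hh hc'0
        n tt httmono htt0 htth
    calc P {ω | ∃ s ∈ Set.Icc (0:ℝ) h, c ≤ B s ω}
        ≤ P {ω | ∃ x ∈ D, c - δ ≤ B x ω} := measure_mono_ae hsub
      _ ≤ P (⋃ N, E N) := measure_mono hcup
      _ = ⨆ N, P (E N) := (hEmono.directed_le).measure_iUnion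
      _ ≤ ENNReal.ofReal (Real.exp (-(c-δ)^2/(2*h))) := iSup_le hEbound
  -- limit δ → 0⁺
  have htend : Filter.Tendsto (fun δ : ℝ => ENNReal.ofReal (Real.exp (-(c-δ)^2/(2*h))))
      (nhdsWithin 0 (Set.Ioi 0)) (nhds (ENNReal.ofReal (Real.exp (-c^2/(2*h))))) := by
    have hcontf : Continuous fun δ : ℝ => ENNReal.ofReal (Real.exp (-(c-δ)^2/(2*h))) :=
      ENNReal.continuous_ofReal.comp (Real.continuous_exp.comp (by continuity))
    have := hcontf.tendsto 0
    simp only [sub_zero] at this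
    exact this.mono_left nhdsWithin_le_nhds
  refine ge_of_tendsto htend ?_
  filter_upwards [Ioo_mem_nhdsGT_of_mem (Set.mem_Ico.mpr ⟨le_rfl, hc⟩)] with δ hδ
  exact main δ hδ

lemma isStandardBM_neg {Ω : Type*} [MeasurableSpace Ω] {P : Measure Ω}
    {B : ℝ → Ω → ℝ} (hB : IsStandardBM P B) : IsStandardBM P (fun t ω => -B t ω) := by
  obtain ⟨hmeas, hzero, hcont, hlaw, hindep⟩ := hB
  refine ⟨fun t => (hmeas t).neg, ?_, ?_, ?_, ?_⟩
  · filter_upwards [hzero] with ω hω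
    rw [hω, neg_zero]
  · filter_upwards [hcont] with ω hω
    exact hω.neg
  · intro s t hs hst
    have heq : (fun ω => -B t ω - -B s ω)
        = (fun x : ℝ => (-1) * x) ∘ (fun ω => B t ω - B s ω) := by
      funext ω; simp [Function.comp]; ring
    have h1 : NNReal.mk ((-1:ℝ)^2) (sq_nonneg _) = 1 := by ext; norm_num
    rw [heq, ← Measure.map_map (g := fun x : ℝ => (-1) * x) (f := fun ω => B t ω - B s ω) (measurable_id.const_mul _) ((hmeas t).sub (hmeas s)),
      hlaw s t hs hst, gaussianReal_map_const_mul, h1, one_mul]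
    norm_num
  · intro n t ht htnn
    have heq : (fun (i : Fin n) ω => (-B (t i.succ) ω) - (-B (t i.castSucc) ω))
        = fun i => (fun x : ℝ => -x) ∘ (fun ω => B (t i.succ) ω - B (t i.castSucc) ω) := by
      funext i ω; simp [Function.comp]; ring
    rw [heq]
    exact (hindep n t ht htnn).comp (fun i => fun x : ℝ => -x) (fun i => measurable_neg)


theorem exit_shrinking_ball_bound
    {Ω : Type*} [MeasurableSpace Ω] (P : Measure Ω) [IsProbabilityMeasure P]
    (m : ℕ) (hm : 1 ≤ m) (W : ℝ → Ω → EuclideanSpace ℝ (Fin m))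
    (hW : IsStandardBMn m P W)
    (K r h : ℝ) (hK : 0 ≤ K) (hr : 0 < r) (hh : 0 < h) (hhr : K * h < r) :
    P {ω | ∃ s ∈ Set.Icc (0:ℝ) h, r - K * s ≤ ‖W s ω‖}
      ≤ ENNReal.ofReal (2 * m * Real.exp (r * K / m - r ^ 2 / (2 * h * m))) := by
  obtain ⟨hcoord, hWindep⟩ := hW
  have hm0 : (0:ℝ) < m := by exact_mod_cast hm
  set ρ : ℝ := r - K * h with hρ
  have hρ0 : 0 < ρ := by rw [hρ]; linarith
  have hsm : 0 < Real.sqrt m := Real.sqrt_pos.mpr hm0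
  set c : ℝ := ρ / Real.sqrt m with hcdef
  have hc0 : 0 < c := div_pos hρ0 hsm
  have hc2 : (m:ℝ) * c^2 = ρ^2 := by
    rw [hcdef, div_pow, Real.sq_sqrt hm0.le]
    field_simp
  -- inclusion into coordinate events
  have hincl : {ω | ∃ s ∈ Set.Icc (0:ℝ) h, r - K * s ≤ ‖W s ω‖}
      ⊆ ⋃ i : Fin m, ({ω | ∃ s ∈ Set.Icc (0:ℝ) h, c ≤ W s ω i}
        ∪ {ω | ∃ s ∈ Set.Icc (0:ℝ) h, c ≤ -W s ω i}) := by
    intro ω hω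
    obtain ⟨s, hs, hns⟩ := hω
    have hρs : ρ ≤ ‖W s ω‖ := by
      refine le_trans ?_ hns
      rw [hρ]
      nlinarith [hs.1, hs.2]
    have hex : ∃ i : Fin m, c ≤ |W s ω i| := by
      by_contra hcon
      push_neg at hcon
      have hlt : ∀ i : Fin m, (W s ω i)^2 < c^2 := by
        intro i
        have h1 := hcon i
        nlinarith [abs_nonneg (W s ω i), sq_abs (W s ω i)]
      have hne : (Finset.univ : Finset (Fin m)).Nonempty := by
        rw [Finset.univ_nonempty_iff]
        exact Fin.pos_iff_nonempty.mp (by omega)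
      have hsum : ∑ i : Fin m, (W s ω i)^2 < ∑ _i : Fin m, c^2 :=
        Finset.sum_lt_sum_of_nonempty hne (fun i _ => hlt i)
      have hsumc : ∑ _i : Fin m, c^2 = (m:ℝ) * c^2 := by
        rw [Finset.sum_const, Finset.card_univ, Fintype.card_fin, nsmul_eq_mul]
      have hnorm : ‖W s ω‖^2 = ∑ i, (W s ω i)^2 := by
        rw [EuclideanSpace.norm_eq, Real.sq_sqrt (by positivity)]
        congr 1
        funext i
        rw [Real.norm_eq_abs, sq_abs]
      nlinarith [hρs, norm_nonneg (W s ω)]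
    obtain ⟨i, hi⟩ := hex
    rcases le_abs.mp hi with h1 | h1
    · exact Set.mem_iUnion.mpr ⟨i, Or.inl ⟨s, hs, h1⟩⟩
    · exact Set.mem_iUnion.mpr ⟨i, Or.inr ⟨s, hs, h1⟩⟩
  have hone : ∀ i : Fin m, P {ω | ∃ s ∈ Set.Icc (0:ℝ) h, c ≤ W s ω i}
      ≤ ENNReal.ofReal (Real.exp (-c^2/(2*h))) :=
    fun i => bm_sup_bound P (hcoord i) hh hc0
  have htwo : ∀ i : Fin m, P {ω | ∃ s ∈ Set.Icc (0:ℝ) h, c ≤ -W s ω i}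
      ≤ ENNReal.ofReal (Real.exp (-c^2/(2*h))) :=
    fun i => bm_sup_bound P (isStandardBM_neg (hcoord i)) hh hc0
  have hexple : Real.exp (-c^2/(2*h)) ≤ Real.exp (r * K / m - r ^ 2 / (2 * h * m)) := by
    apply Real.exp_le_exp.mpr
    have hc2' : c^2 = ρ^2 / m := by
      field_simp at hc2 ⊢
      linarith [hc2]
    have h2h : (0:ℝ) < 2*h := by positivity
    have e1 : -c^2/(2*h) = -(ρ^2)/(2*h*(m:ℝ)) := by
      rw [hc2']
      field_simp
    have e2 : r*K/(m:ℝ) = (2*h*(r*K))/(2*h*(m:ℝ)) :=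
      (mul_div_mul_left (r*K) (m:ℝ) (ne_of_gt h2h)).symm
    rw [e1, e2, div_sub_div_same, div_le_div_iff₀ (by positivity) (by positivity)]
    have hkey : -ρ^2 ≤ 2*h*(r*K) - r^2 := by
      rw [hρ]
      nlinarith [sq_nonneg (K*h)]
    exact mul_le_mul_of_nonneg_right hkey (le_of_lt (by positivity))
  calc P {ω | ∃ s ∈ Set.Icc (0:ℝ) h, r - K * s ≤ ‖W s ω‖}
      ≤ P (⋃ i : Fin m, ({ω | ∃ s ∈ Set.Icc (0:ℝ) h, c ≤ W s ω i}
        ∪ {ω | ∃ s ∈ Set.Icc (0:ℝ) h, c ≤ -W s ω i})) := measure_mono hincl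
    _ ≤ ∑' i : Fin m, P ({ω | ∃ s ∈ Set.Icc (0:ℝ) h, c ≤ W s ω i}
        ∪ {ω | ∃ s ∈ Set.Icc (0:ℝ) h, c ≤ -W s ω i}) := measure_iUnion_le _
    _ = ∑ i : Fin m, P ({ω | ∃ s ∈ Set.Icc (0:ℝ) h, c ≤ W s ω i}
        ∪ {ω | ∃ s ∈ Set.Icc (0:ℝ) h, c ≤ -W s ω i}) := tsum_fintype _
    _ ≤ ∑ _i : Fin m, ENNReal.ofReal (2 * Real.exp (-c^2/(2*h))) := by
        refine Finset.sum_le_sum fun i _ => ?_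
        refine le_trans (measure_union_le _ _) ?_
        refine le_trans (add_le_add (hone i) (htwo i)) ?_
        rw [← ENNReal.ofReal_add (Real.exp_nonneg _) (Real.exp_nonneg _)]
        apply ENNReal.ofReal_le_ofReal
        ring_nf
        exact le_rfl
    _ = ENNReal.ofReal ((m:ℝ) * (2 * Real.exp (-c^2/(2*h)))) := by
        rw [Finset.sum_const, Finset.card_univ, Fintype.card_fin, nsmul_eq_mul,
          ← ENNReal.ofReal_natCast m, ← ENNReal.ofReal_mul (Nat.cast_nonneg m)]
    _ ≤ ENNReal.ofReal (2 * m * Real.exp (r * K / m - r ^ 2 / (2 * h * m))) := by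
        apply ENNReal.ofReal_le_ofReal
        have h2 : (0:ℝ) ≤ 2 * m := by positivity
        nlinarith [hexple, hm0, Real.exp_nonneg (-c^2/(2*h))]
end
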